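/- arXiv:math/0503242 — 3 statements merged into one kernel-verified Lean document; each statement's English description precedes it below -/
import Mathlib

section
/- Every nontrivial variety contains a nontrivial fluid subvariety. -/
/-- A similarity type: operation symbols with arities. -/
structure Signature where
  I : Type
  arity : I → ℕ

/-- Terms of a signature over a variable type. -/
inductive Term (sig : Signature) (V : Type) : Type
  | var : V → Term sig V
  | app : (i : sig.I) → (Fin (sig.arity i) → Term sig V) → Term sig V

/-- Substitution of terms for variables. -/
def Term.bind {sig : Signature} {V W : Type} : Term sig V → (V → Term sig W) → Term sig W
  | .var v, f => f v
  | .app i ts, f => .app i (fun k => (ts k).bind f)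

/-- An algebra of a signature (with nonempty carrier). -/
structure Alg (sig : Signature) where
  carrier : Type
  interp : (i : sig.I) → (Fin (sig.arity i) → carrier) → carrier
  nonempty : Nonempty carrier

/-- Evaluation of a term in an algebra under an assignment. -/
def Alg.eval {sig : Signature} {V : Type} (A : Alg sig) (v : V → A.carrier) :
    Term sig V → A.carrier
  | .var x => v x
  | .app i ts => A.interp i (fun k => A.eval v (ts k))

/-- A hypersubstitution assigns to each operation symbol a term of the same arity. -/
abbrev Hyp (sig : Signature) := (i : sig.I) → Term sig (Fin (sig.arity i))

/-- The extension of a hypersubstitution to all terms. -/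
def hypApply {sig : Signature} {V : Type} (σ : Hyp sig) : Term sig V → Term sig V
  | .var x => .var x
  | .app i ts => (σ i).bind (fun k => hypApply σ (ts k))

/-- The derived algebra `A_σ`. -/
def derive {sig : Signature} (σ : Hyp sig) (A : Alg sig) : Alg sig :=
  ⟨A.carrier, fun i args => A.eval args (σ i), A.nonempty⟩

/-- An identity `p = q` holds in an algebra. -/
def Satisfies {sig : Signature} (A : Alg sig) (e : Term sig ℕ × Term sig ℕ) : Prop :=
  ∀ v : ℕ → A.carrier, A.eval v e.1 = A.eval v e.2

/-- Models of a set of identities. -/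
def Models {sig : Signature} (E : Set (Term sig ℕ × Term sig ℕ)) : Set (Alg sig) :=
  {A | ∀ e ∈ E, Satisfies A e}

/-- Equational theory of a class of algebras. -/
def Th {sig : Signature} (K : Set (Alg sig)) : Set (Term sig ℕ × Term sig ℕ) :=
  {e | ∀ A ∈ K, Satisfies A e}

/-- The variety generated by a class. -/
def varGen {sig : Signature} (K : Set (Alg sig)) : Set (Alg sig) := Models (Th K)

/-- A class is a variety iff it is an equational class. -/
def IsVariety {sig : Signature} (V : Set (Alg sig)) : Prop := ∃ E, V = Models E

/-- The derived variety `V_σ`. -/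
def derivedVariety {sig : Signature} (V : Set (Alg sig)) (σ : Hyp sig) : Set (Alg sig) :=
  varGen {B | ∃ A ∈ V, B = derive σ A}

/-- A class is trivial if all its algebras are one-element. -/
def TrivialVar {sig : Signature} (V : Set (Alg sig)) : Prop :=
  ∀ A ∈ V, Subsingleton A.carrier

/-- A variety is fluid if it contains no proper derived variety. -/
def Fluid {sig : Signature} (V : Set (Alg sig)) : Prop :=
  ∀ σ : Hyp sig, derivedVariety V σ ⊆ V → derivedVariety V σ = V

/-- The signature with one binary operation symbol. -/
def sig2 : Signature := ⟨Unit, fun _ => 2⟩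

/-- The binary operation of a `sig2`-algebra. -/
def bop (A : Alg sig2) (x y : A.carrier) : A.carrier := A.interp () ![x, y]

/-- The hypersubstitution sending `x·y` to the first projection `x`. -/
def proj1 : Hyp sig2 := fun _ => Term.var ⟨0, by simp [sig2]⟩

/-- The variety of bands (idempotent semigroups). -/
def Bands : Set (Alg sig2) :=
  {A | (∀ x y z, bop A (bop A x y) z = bop A x (bop A y z)) ∧ (∀ x, bop A x x = x)}

/-- The variety of left-zero semigroups. -/
def LeftZero : Set (Alg sig2) := {A | ∀ x y, bop A x y = x}

section Aux

variable {sig : Signature}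

/-- Equational derivability. -/
inductive Deriv (E : Set (Term sig ℕ × Term sig ℕ)) : Term sig ℕ → Term sig ℕ → Prop
  | ax {p q : Term sig ℕ} (f : ℕ → Term sig ℕ) (h : (p, q) ∈ E) :
      Deriv E (p.bind f) (q.bind f)
  | refl (p : Term sig ℕ) : Deriv E p p
  | symm {p q} : Deriv E p q → Deriv E q p
  | trans {p q r} : Deriv E p q → Deriv E q r → Deriv E p r
  | app (i : sig.I) {ts us : Fin (sig.arity i) → Term sig ℕ}
      (h : ∀ k, Deriv E (ts k) (us k)) : Deriv E (.app i ts) (.app i us)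

theorem eval_bind {V W : Type} (A : Alg sig) (v : W → A.carrier) (t : Term sig V)
    (f : V → Term sig W) :
    A.eval v (t.bind f) = A.eval (fun x => A.eval v (f x)) t := by
  induction t with
  | var x => rfl
  | app i ts ih => simp only [Term.bind, Alg.eval]; exact congrArg _ (funext fun k => ih k)

theorem sound {E : Set (Term sig ℕ × Term sig ℕ)} {A : Alg sig}
    (hA : ∀ e ∈ E, Satisfies A e) {p q} (h : Deriv E p q) : Satisfies A (p, q) := by
  induction h with
  | ax f hpq => intro v; simp only [eval_bind]; exact hA _ hpq _
  | refl p => intro v; rfl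
  | symm _ ih => intro v; exact (ih v).symm
  | trans _ _ ih1 ih2 => intro v; exact (ih1 v).trans (ih2 v)
  | app i h ih =>
      intro v
      show A.interp i _ = A.interp i _
      exact congrArg _ (funext fun k => ih k v)

theorem Deriv.mono {E F : Set (Term sig ℕ × Term sig ℕ)} (hEF : E ⊆ F) {p q}
    (h : Deriv E p q) : Deriv F p q := by
  induction h with
  | ax f hpq => exact .ax f (hEF hpq)
  | refl p => exact .refl p
  | symm _ ih => exact ih.symm
  | trans _ _ ih1 ih2 => exact ih1.trans ih2
  | app i h ih => exact .app i ih

theorem chain_bound {α : Type*} {C : Set (Set α)} (hC : IsChain (· ⊆ ·) C)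
    (hne : C.Nonempty) {n : ℕ} (g : Fin n → Set α) (hg : ∀ k, g k ∈ C) :
    ∃ F ∈ C, ∀ k, g k ⊆ F := by
  induction n with
  | zero => exact ⟨hne.choose, hne.choose_spec, fun k => k.elim0⟩
  | succ n ih =>
    obtain ⟨F, hF, hFk⟩ := ih (fun k => g k.castSucc) (fun k => hg _)
    rcases eq_or_ne F (g (Fin.last n)) with h | h
    · exact ⟨F, hF, fun k => by
        rcases Fin.lastCases (motive := fun k => g k ⊆ F) (h ▸ le_refl _) hFk k with hk
        exact hk⟩
    · rcases hC hF (hg (Fin.last n)) h with h' | h'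
      · refine ⟨g (Fin.last n), hg _, fun k => ?_⟩
        exact Fin.lastCases (le_refl _) (fun j => (hFk j).trans h') k
      · exact ⟨F, hF, Fin.lastCases h' hFk⟩

theorem deriv_sUnion {C : Set (Set (Term sig ℕ × Term sig ℕ))} (hC : IsChain (· ⊆ ·) C)
    (hne : C.Nonempty) {p q} (h : Deriv (⋃₀ C) p q) : ∃ F ∈ C, Deriv F p q := by
  induction h with
  | ax f hpq =>
      obtain ⟨F, hF, hmem⟩ := hpq
      exact ⟨F, hF, .ax f hmem⟩
  | refl p => exact ⟨hne.choose, hne.choose_spec, .refl p⟩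
  | symm _ ih => obtain ⟨F, hF, h⟩ := ih; exact ⟨F, hF, h.symm⟩
  | trans _ _ ih1 ih2 =>
      obtain ⟨F1, hF1, h1⟩ := ih1
      obtain ⟨F2, hF2, h2⟩ := ih2
      rcases eq_or_ne F1 F2 with rfl | hne'
      · exact ⟨F1, hF1, h1.trans h2⟩
      · rcases hC hF1 hF2 hne' with h' | h'
        · exact ⟨F2, hF2, (h1.mono h').trans h2⟩
        · exact ⟨F1, hF1, h1.trans (h2.mono h')⟩
  | app i h ih =>
      choose F hF hD using ih
      obtain ⟨G, hG, hGk⟩ := chain_bound hC hne F hF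
      exact ⟨G, hG, .app i (fun k => (hD k).mono (hGk k))⟩

/-- The setoid of derivable equality. -/
def derivSetoid (E : Set (Term sig ℕ × Term sig ℕ)) : Setoid (Term sig ℕ) :=
  ⟨Deriv E, ⟨Deriv.refl, Deriv.symm, Deriv.trans⟩⟩

/-- The relatively free algebra on countably many generators. -/
noncomputable def FreeAlg (E : Set (Term sig ℕ × Term sig ℕ)) : Alg sig where
  carrier := Quotient (derivSetoid E)
  interp := fun i args => Quotient.mk _ (Term.app i (fun k => (args k).out))
  nonempty := ⟨Quotient.mk _ (Term.var 0)⟩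

theorem freeAlg_eval (E : Set (Term sig ℕ × Term sig ℕ)) (f : ℕ → Term sig ℕ)
    (t : Term sig ℕ) :
    (FreeAlg E).eval (fun n => Quotient.mk _ (f n)) t = Quotient.mk _ (t.bind f) := by
  induction t with
  | var x => rfl
  | app i ts ih =>
      show Quotient.mk _ _ = _
      refine Quotient.sound (Deriv.app i (fun k => ?_))
      simp only [ih]
      exact @Quotient.mk_out _ (derivSetoid E) ((ts k).bind f)

theorem freeAlg_models (E : Set (Term sig ℕ × Term sig ℕ)) : FreeAlg E ∈ Models E := by
  intro e he v
  have hv : v = fun n => Quotient.mk _ ((v n).out) := by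
    funext n; exact (Quotient.out_eq _).symm
  rw [hv, freeAlg_eval, freeAlg_eval]
  exact Quotient.sound (Deriv.ax _ (by exact he))

theorem freeAlg_nontrivial {E : Set (Term sig ℕ × Term sig ℕ)}
    (h : ¬ Deriv E (Term.var 0) (Term.var 1)) : ¬ Subsingleton (FreeAlg E).carrier := by
  intro hs
  exact h (Quotient.exact (hs.elim (Quotient.mk _ (Term.var 0)) (Quotient.mk _ (Term.var 1))))

theorem models_antitone {E F : Set (Term sig ℕ × Term sig ℕ)} (h : E ⊆ F) :
    Models F ⊆ Models E := fun A hA e he => hA e (h he)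

theorem th_antitone {K L : Set (Alg sig)} (h : K ⊆ L) : Th L ⊆ Th K :=
  fun e he A hA => he A (h hA)

theorem subset_varGen (K : Set (Alg sig)) : K ⊆ varGen K :=
  fun A hA e he => he A hA

theorem models_th_of_variety {U : Set (Alg sig)} (hU : IsVariety U) : Models (Th U) = U := by
  obtain ⟨E, rfl⟩ := hU
  apply Set.Subset.antisymm
  · exact models_antitone (fun e he A hA => hA e he)
  · exact subset_varGen _

theorem sat_var01_subsingleton {A : Alg sig}
    (h : Satisfies A (Term.var 0, Term.var 1)) : Subsingleton A.carrier := by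
  constructor
  intro a b
  have := h (fun n => if n = 0 then a else b)
  simpa [Alg.eval] using this

theorem not_deriv_of_nontrivial {U : Set (Alg sig)} (h : ¬ TrivialVar U) :
    ¬ Deriv (Th U) (Term.var 0) (Term.var 1) := by
  intro hd
  apply h
  intro A hA
  exact sat_var01_subsingleton (sound (fun e (he : e ∈ Th U) => he A hA) hd)

end Aux

/-- Every nontrivial variety contains a nontrivial fluid subvariety. -/
theorem nontrivial_contains_fluid {sig : Signature} (V : Set (Alg sig))
    (hV : IsVariety V) (hnontriv : ¬ TrivialVar V) :
    ∃ W : Set (Alg sig), IsVariety W ∧ W ⊆ V ∧ ¬ TrivialVar W ∧ Fluid W := by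
  classical
  set S : Set (Set (Term sig ℕ × Term sig ℕ)) :=
    {E | Th V ⊆ E ∧ ¬ Deriv E (Term.var 0) (Term.var 1)} with hS
  have hThV : Th V ∈ S := ⟨Set.Subset.rfl, not_deriv_of_nontrivial hnontriv⟩
  obtain ⟨M, hM, hMS, hmax⟩ : ∃ M, Th V ⊆ M ∧ Maximal (· ∈ S) M := by
    apply zorn_subset_nonempty S ?_ _ hThV
    intro c hcS hchain hcne
    refine ⟨⋃₀ c, ⟨?_, ?_⟩, fun s hs => Set.subset_sUnion_of_mem hs⟩
    · obtain ⟨F, hF⟩ := hcne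
      exact (hcS hF).1.trans (Set.subset_sUnion_of_mem hF)
    · intro hd
      obtain ⟨F, hF, hdF⟩ := deriv_sUnion hchain hcne hd
      exact (hcS hF).2 hdF
  obtain ⟨hMsub, hMnd⟩ : Th V ⊆ M ∧ ¬ Deriv M (Term.var 0) (Term.var 1) := hMS
  have hVeq : Models (Th V) = V := models_th_of_variety hV
  refine ⟨Models M, ⟨M, rfl⟩, ?_, ?_, ?_⟩
  · exact (models_antitone hMsub).trans hVeq.subset
  · intro htriv
    exact freeAlg_nontrivial hMnd (htriv (FreeAlg M) (freeAlg_models M))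
  · -- minimality
    have hmin : ∀ U : Set (Alg sig), IsVariety U → U ⊆ Models M → ¬ TrivialVar U →
        U = Models M := by
      intro U hUvar hUsub hUnt
      have hUV : U ⊆ V := hUsub.trans ((models_antitone hMsub).trans hVeq.subset)
      have hMU : M ⊆ Th U := by
        intro e he
        exact fun A hA => hUsub hA e he
      have hUS : Th U ∈ S := ⟨th_antitone hUV, not_deriv_of_nontrivial hUnt⟩
      have : Th U = M := le_antisymm (hmax hUS hMU) hMU
      rw [← models_th_of_variety hUvar, this]
    intro σ hsub
    apply hmin _ ⟨_, rfl⟩ hsub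
    intro htriv
    obtain ⟨A, hA, hAn⟩ : ∃ A ∈ Models M, ¬ Subsingleton A.carrier :=
      ⟨FreeAlg M, freeAlg_models M, freeAlg_nontrivial hMnd⟩
    have hmem : derive σ A ∈ derivedVariety (Models M) σ :=
      subset_varGen _ ⟨A, hA, rfl⟩
    exact hAn (htriv (derive σ A) hmem)
end

section
/- The variety of rectangular bands is not fluid: under the hypersubstitution σ(x·y) = x, the derived variety σ(W_1) is the variety of left-zero semigroups (defined by x·y = x within bands), which is a proper subvariety of W_1. -/
/-- The variety of rectangular bands. -/
def RectBands : Set (Alg sig2) :=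
  {A | A ∈ Bands ∧ ∀ x y, bop A (bop A y x) y = y}

lemma interp_eq (A : Alg sig2) (f : Fin 2 → A.carrier) :
    A.interp () f = bop A (f 0) (f 1) := by
  unfold bop
  congr 1
  funext k
  fin_cases k <;> simp

lemma bop_derive (A : Alg sig2) (x y : A.carrier) :
    bop (derive proj1 A) x y = x := by
  simp [bop, derive, proj1, Alg.eval]; rfl

lemma derive_mem_leftZero (A : Alg sig2) : derive proj1 A ∈ LeftZero := by
  intro x y
  exact bop_derive A x y

lemma leftZero_sub_rect : LeftZero ⊆ RectBands := by
  intro A hA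
  refine ⟨⟨fun x y z => ?_, fun x => ?_⟩, fun x y => ?_⟩ <;> simp [hA _ _]

lemma derive_eq_self (B : Alg sig2) (hB : B ∈ LeftZero) : derive proj1 B = B := by
  have key : ∀ args : Fin 2 → B.carrier,
      (derive proj1 B).interp () args = B.interp () args := by
    intro args
    have h1 : (derive proj1 B).interp () args = args 0 := by
      simp [derive, proj1, Alg.eval]; rfl
    have h2 : B.interp () args = args 0 := by
      rw [interp_eq]; exact hB _ _
    rw [h1, h2]
  cases B with
  | mk c it ne =>
    show Alg.mk c _ ne = Alg.mk c it ne
    congr 1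
    funext i args
    exact key args

/-- the identity x·y = x -/
def lzId : Term sig2 ℕ × Term sig2 ℕ :=
  (Term.app () ![Term.var 0, Term.var 1], Term.var 0)

lemma lzId_in_Th :
    lzId ∈ Th {B | ∃ A ∈ RectBands, B = derive proj1 A} := by
  rintro B ⟨A, _, rfl⟩ v
  show (derive proj1 A).eval v (Term.app () ![Term.var 0, Term.var 1]) = v 0
  show (derive proj1 A).interp () _ = v 0
  erw [interp_eq, bop_derive]
  simp [Alg.eval]

lemma derived_eq : derivedVariety RectBands proj1 = LeftZero := by
  apply Set.Subset.antisymm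
  · intro A hA x y
    have h := hA lzId lzId_in_Th
    have h2 := h (fun n => if n = 0 then x else y)
    have h3 : A.eval (fun n => if n = 0 then x else y)
        (Term.app () ![Term.var 0, Term.var 1]) = bop A x y := by
      show A.interp () _ = _
      erw [interp_eq]
      simp [Alg.eval]
    simp only [lzId] at h2
    rw [h3] at h2
    simpa [Alg.eval] using h2
  · intro B hB e he
    exact he B ⟨B, leftZero_sub_rect hB, (derive_eq_self B hB).symm⟩

/-- right-zero semigroup on Bool -/
def RZ : Alg sig2 := ⟨Bool, fun _ f => f ⟨1, by simp [sig2]⟩, ⟨true⟩⟩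

lemma RZ_bop (x y : Bool) : bop RZ x y = y := by simp [bop, RZ]; rfl

lemma lz_ssub : LeftZero ⊂ RectBands := by
  refine ⟨leftZero_sub_rect, fun h => ?_⟩
  have hRZ : RZ ∈ RectBands := by
    refine ⟨⟨fun x y z => ?_, fun x => ?_⟩, fun x y => ?_⟩ <;> rfl
  have := h hRZ true false
  simp [RZ_bop] at this

/-- Rectangular bands are not fluid: the derived variety under the
first projection is the variety of left-zero semigroups, a proper subvariety. -/
theorem rect_bands_not_fluid :
    derivedVariety RectBands proj1 = LeftZero ∧ LeftZero ⊂ RectBands ∧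
      ¬ Fluid RectBands := by
  refine ⟨derived_eq, lz_ssub, fun h => ?_⟩
  have hsub : derivedVariety RectBands proj1 ⊆ RectBands := by
    rw [derived_eq]; exact leftZero_sub_rect
  have heq := h proj1 hsub
  rw [derived_eq] at heq
  exact lz_ssub.2 heq.ge
end

section
/- The variety V_1 of left normal bands (bands satisfying z·x·y = z·y·x) is not fluid: under the hypersubstitution σ(x·y) = x, the derived variety σ(V_1) satisfies y·x = y, is different from V_1, and is contained in V_1. -/
/-- The variety V₁ of left normal bands: bands with z·x·y = z·y·x. -/
def LeftNormal : Set (Alg sig2) :=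
  {A | A ∈ Bands ∧ ∀ z x y, bop A (bop A z x) y = bop A (bop A z y) x}

/-- The left-zero identity `x·y = x`. -/
def lzEq : Term sig2 ℕ × Term sig2 ℕ :=
  (Term.app () ![Term.var 0, Term.var 1], Term.var 0)

lemma eval_app (A : Alg sig2) (v : ℕ → A.carrier) (x y : Term sig2 ℕ) :
    A.eval v (Term.app () ![x, y]) = bop A (A.eval v x) (A.eval v y) := by
  show A.interp () _ = A.interp () _
  congr 1
  funext k
  fin_cases k <;> rfl

lemma derived_lz : ∀ A ∈ derivedVariety LeftNormal proj1, ∀ x y, bop A x y = x := by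
  intro A hA x y
  have hth : lzEq ∈ Th {B | ∃ A ∈ LeftNormal, B = derive proj1 A} := by
    intro B hB v
    obtain ⟨A', _, rfl⟩ := hB
    show A'.eval (fun k => (derive proj1 A').eval v (![Term.var 0, Term.var 1] k)) (proj1 ()) = v 0
    show (derive proj1 A').eval v (![Term.var 0, Term.var 1] ⟨0, Nat.zero_lt_two⟩) = v 0
    show (derive proj1 A').eval v (Term.var 0) = v 0
    rfl
  have hsat := hA lzEq hth
  have := hsat (fun n => if n = 0 then x else y)
  simp only [lzEq] at this
  rw [eval_app] at this
  simpa [Alg.eval] using this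

/-- The two-element semilattice (Bool with `&&`). -/
def BoolAnd : Alg sig2 := ⟨Bool, fun _ args => args ⟨0, Nat.zero_lt_two⟩ && args ⟨1, Nat.one_lt_two⟩, ⟨true⟩⟩

lemma bop_boolAnd (x y : Bool) : bop BoolAnd x y = (x && y) := by
  cases x <;> cases y <;> rfl

lemma boolAnd_leftNormal : BoolAnd ∈ LeftNormal :=
  ⟨⟨fun x y z => by cases x <;> cases y <;> cases z <;> rfl,
    fun x => by cases x <;> rfl⟩,
   fun z x y => by cases z <;> cases x <;> cases y <;> rfl⟩

/-- V₁ is not fluid: under σ(x·y) = x, the derived variety satisfies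
y·x = y, is different from V₁, and is contained in V₁. -/
theorem left_normal_not_fluid :
    (∀ A ∈ derivedVariety LeftNormal proj1, ∀ x y, bop A y x = y) ∧
      derivedVariety LeftNormal proj1 ≠ LeftNormal ∧
      derivedVariety LeftNormal proj1 ⊆ LeftNormal ∧
      ¬ Fluid LeftNormal := by
  have hlz := derived_lz
  have hne : derivedVariety LeftNormal proj1 ≠ LeftNormal := by
    intro h
    have hmem : BoolAnd ∈ derivedVariety LeftNormal proj1 := by rw [h]; exact boolAnd_leftNormal
    have := hlz BoolAnd hmem true false
    simp [bop_boolAnd] at this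
  have hsub : derivedVariety LeftNormal proj1 ⊆ LeftNormal := by
    intro A hA
    have lz := hlz A hA
    exact ⟨⟨fun x y z => by simp [lz], fun x => by simp [lz]⟩,
      fun z x y => by simp [lz]⟩
  refine ⟨fun A hA x y => hlz A hA y x, hne, hsub, fun hf => hne (hf proj1 hsub)⟩
end
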